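/- If 0 < y < 1 and x² + (y − 1/2)² = 1/4 with (x,y) ≠ (0,0), (0,1) (i.e., x² + y² = y), then the quadratic Q⁵₂(x,y,p) = 4(x²+y²)p² + 4x(x²+y²−1)p − (x²+y²−1)³ in p has a double real root p = √y·(1−y)^{3/2}/(2y) when x > 0 is determined by x² = y − y², and in general its discriminant vanishes exactly on the curves x² + y² = ±y. -/

import Mathlib

/-- on the circle `x²+y² = y` with `0 < y < 1` and `x > 0`
(so `x² = y − y²`), the quadratic `Q⁵₂(x,y,·)` has the double real root
`p₀ = √y·(1−y)^{3/2}/(2y)`, i.e. `Q⁵₂(x,y,p) = 4(x²+y²)(p−p₀)²`;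
and (off `S¹`) the discriminant vanishes exactly on the curves `x²+y² = ±y`. -/
theorem stmt12 :
    (∀ x y : ℝ, 0 < y → y < 1 → 0 < x → x ^ 2 + y ^ 2 = y →
      ∀ p : ℝ,
        4 * (x ^ 2 + y ^ 2) * p ^ 2 + 4 * x * (x ^ 2 + y ^ 2 - 1) * p
            - (x ^ 2 + y ^ 2 - 1) ^ 3
          = 4 * (x ^ 2 + y ^ 2)
            * (p - Real.sqrt y * ((1 - y) * Real.sqrt (1 - y)) / (2 * y)) ^ 2) ∧
    (∀ x y : ℝ, x ^ 2 + y ^ 2 ≠ 1 →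
      ((4 * x * (x ^ 2 + y ^ 2 - 1)) ^ 2
          - 4 * (4 * (x ^ 2 + y ^ 2)) * (-(x ^ 2 + y ^ 2 - 1) ^ 3) = 0 ↔
        (x ^ 2 + y ^ 2 = y ∨ x ^ 2 + y ^ 2 = -y))) := by
  constructor
  · intro x y hy0 hy1 hx hcirc p
    set u := Real.sqrt y with hu
    set v := Real.sqrt (1 - y) with hv
    have hu2 : u ^ 2 = y := Real.sq_sqrt hy0.le
    have hv2 : v ^ 2 = 1 - y := Real.sq_sqrt (by linarith)
    have hx2 : x ^ 2 = (u * v) ^ 2 := by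
      have : x ^ 2 = y - y ^ 2 := by linarith
      rw [this]; nlinarith [hu2, hv2]
    have hu0 : 0 ≤ u := Real.sqrt_nonneg y
    have hv0 : 0 ≤ v := Real.sqrt_nonneg (1 - y)
    have hxuv : x = u * v := by
      nlinarith [hx2, hx, mul_nonneg hu0 hv0]
    have hyne : y ≠ 0 := ne_of_gt hy0
    have hcirc2 : (u * v) ^ 2 + y ^ 2 = y := by rw [← hx2]; exact hcirc
    rw [hxuv]
    field_simp
    rw [show u ^ 2 * v ^ 2 + y ^ 2 = y by rw [← mul_pow]; exact hcirc2]
    linear_combination (-4*y*(1-y)^2*v^2) * hu2 + (-4*y^2*(1-y)^2) * hv2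
  · intro x y hne
    have h1 : x ^ 2 + y ^ 2 - 1 ≠ 0 := fun h => hne (by linarith)
    constructor
    · intro h
      have key : (x ^ 2 + y ^ 2 - y) * (x ^ 2 + y ^ 2 + y) = 0 := by
        have h2 : (x ^ 2 + y ^ 2 - 1) ^ 2 ≠ 0 := pow_ne_zero 2 h1
        have : (x ^ 2 + y ^ 2 - 1) ^ 2 * ((x ^ 2 + y ^ 2 - y) * (x ^ 2 + y ^ 2 + y)) = 0 := by
          nlinarith [h]
        rcases mul_eq_zero.1 this with h' | h'
        · exact absurd h' h2
        · exact h'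
      rcases mul_eq_zero.1 key with h' | h'
      · left; linarith
      · right; linarith
    · rintro (h | h)
      · linear_combination (16*(x^2+y^2-1)^2*(x^2+y^2+y)) * h
      · linear_combination (16*(x^2+y^2-1)^2*(x^2+y^2-y)) * h
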